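/- With the notation of the linear-forcing rod example: let P(z) = Γ(M, αM z/(aT))/(M−1)! and I*(z) = M(α z/(aT) − 1 − log(α z/(aT))). Then lim_{z→∞} log P(z) / I*(z) = −1. -/

import Mathlib

open Real Filter MeasureTheory Set

lemma ig_integrable {m x : ℝ} (hm : 0 ≤ m) (hx : 0 < x) :
    IntegrableOn (fun t : ℝ => t ^ m * Real.exp (-t)) (Ioi x) := by
  have h := (Real.GammaIntegral_convergent (s := m + 1) (by linarith)).mono_set
    (Ioi_subset_Ioi hx.le)
  refine h.congr_fun (fun t ht => ?_) measurableSet_Ioi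
  simp [mul_comm]

lemma gamma_lb {m x : ℝ} (hm : 0 ≤ m) (hx : 0 < x) :
    x ^ m * Real.exp (-x) ≤ ∫ t in Set.Ioi x, t ^ m * Real.exp (-t) := by
  have h1 : IntegrableOn (fun t : ℝ => x ^ m * Real.exp (-t)) (Ioi x) :=
    ((exp_neg_integrableOn_Ioi x one_pos).const_mul (x ^ m)).congr
      (Filter.Eventually.of_forall fun t => by norm_num)
  have h2 := ig_integrable hm hx
  have := setIntegral_mono_on h1 h2 measurableSet_Ioi (fun t ht => by
    have htx : x ≤ t := (mem_Ioi.mp ht).le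
    exact mul_le_mul_of_nonneg_right (Real.rpow_le_rpow hx.le htx hm)
      (Real.exp_pos _).le)
  calc x ^ m * Real.exp (-x) = ∫ t in Ioi x, x ^ m * Real.exp (-t) := by
        rw [integral_const_mul, integral_exp_neg_Ioi]
    _ ≤ _ := this

lemma gamma_ub {m x : ℝ} (hm : 0 ≤ m) (hx : m < x) (hx0 : 0 < x) :
    (∫ t in Set.Ioi x, t ^ m * Real.exp (-t))
      ≤ x ^ m * Real.exp (-x) * (x / (x - m)) := by
  set c : ℝ := 1 - m / x with hc
  have hcpos : 0 < c := by
    have : m / x < 1 := (div_lt_one hx0).mpr hx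
    simp only [hc]; linarith
  have hpt : ∀ t ∈ Ioi x, t ^ m * Real.exp (-t)
      ≤ x ^ m * Real.exp (-m) * Real.exp (-(c * t)) := by
    intro t ht
    have htx : x < t := mem_Ioi.mp ht
    have ht0 : 0 < t := hx0.trans htx
    have key : t ^ m ≤ x ^ m * Real.exp (m * (t - x) / x) := by
      have h1 : t ^ m = x ^ m * (t / x) ^ m := by
        rw [← Real.mul_rpow hx0.le (by positivity), mul_div_cancel₀ _ hx0.ne']
      rw [h1]
      refine mul_le_mul_of_nonneg_left ?_ (by positivity)
      rw [Real.rpow_def_of_pos (by positivity : (0:ℝ) < t / x) m]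
      apply Real.exp_le_exp.mpr
      have h4 := Real.log_le_sub_one_of_pos (by positivity : (0:ℝ) < t / x)
      have h3 : t / x - 1 = (t - x) / x := by field_simp
      rw [mul_div_assoc]
      nlinarith [mul_le_mul_of_nonneg_left h4 hm]
    calc t ^ m * Real.exp (-t)
        ≤ (x ^ m * Real.exp (m * (t - x) / x)) * Real.exp (-t) := by
          exact mul_le_mul_of_nonneg_right key (Real.exp_pos _).le
      _ = x ^ m * Real.exp (-m) * Real.exp (-(c * t)) := by
          rw [mul_assoc, ← Real.exp_add, mul_assoc, ← Real.exp_add]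
          congr 1
          simp only [hc]
          field_simp
          ring
  have hint : IntegrableOn (fun t : ℝ => x ^ m * Real.exp (-m) * Real.exp (-(c * t)))
      (Ioi x) := by
    have h := (exp_neg_integrableOn_Ioi x hcpos).const_mul (x ^ m * Real.exp (-m))
    exact h.congr (Filter.Eventually.of_forall fun t => by norm_num)
  have hmono := setIntegral_mono_on (ig_integrable hm hx0) hint measurableSet_Ioi hpt
  have hval : (∫ t in Ioi x, x ^ m * Real.exp (-m) * Real.exp (-(c * t)))
      = x ^ m * Real.exp (-x) * (x / (x - m)) := by
    rw [integral_const_mul]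
    have h := integral_comp_mul_left_Ioi (fun t => Real.exp (-t)) x hcpos
    simp only [smul_eq_mul] at h
    have hcx : c * x = x - m := by rw [hc]; field_simp
    have hcinv : c⁻¹ = x / (x - m) := by
      rw [hc]; field_simp
    rw [h, integral_exp_neg_Ioi, hcx, hcinv,
      show (-(x - m)) = m + -x by ring, Real.exp_add, Real.exp_neg]
    have h5 := Real.exp_ne_zero m
    have h6 : x - m ≠ 0 := by linarith
    field_simp
  linarith

lemma den_tendsto (r s : ℝ) :
    Tendsto (fun x : ℝ => (x + r * Real.log x + s) / x) atTop (nhds 1) := by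
  have hlog : Tendsto (fun x : ℝ => Real.log x / x) atTop (nhds 0) :=
    Real.isLittleO_log_id_atTop.tendsto_div_nhds_zero
  have hinv : Tendsto (fun x : ℝ => x⁻¹) atTop (nhds 0) := tendsto_inv_atTop_zero
  have h1 : Tendsto (fun x : ℝ => 1 + (r * (Real.log x / x) + s * x⁻¹))
      atTop (nhds (1 + (r * 0 + s * 0))) :=
    tendsto_const_nhds.add ((hlog.const_mul r).add (hinv.const_mul s))
  norm_num at h1
  refine Tendsto.congr' ?_ h1
  filter_upwards [eventually_gt_atTop 0] with x hx
  have hx' : x ≠ 0 := hx.ne'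
  field_simp
  ring

lemma den_pos (r s : ℝ) : ∀ᶠ x : ℝ in atTop, 0 < x + r * Real.log x + s := by
  have h1 := (den_tendsto r s).eventually (lt_mem_nhds (by norm_num : (1:ℝ)/2 < 1))
  filter_upwards [h1, eventually_gt_atTop 0] with x h hx
  have h2 := (lt_div_iff₀ hx).mp h
  linarith

lemma ratio_tendsto (p q r s : ℝ) (ε : ℝ → ℝ) (hε : Tendsto ε atTop (nhds 0)) :
    Tendsto (fun x : ℝ => (-x + p * Real.log x + q + ε x) / (x + r * Real.log x + s))
      atTop (nhds (-1)) := by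
  have hlog : Tendsto (fun x : ℝ => Real.log x / x) atTop (nhds 0) :=
    Real.isLittleO_log_id_atTop.tendsto_div_nhds_zero
  have hinv : Tendsto (fun x : ℝ => x⁻¹) atTop (nhds 0) := tendsto_inv_atTop_zero
  have hnum : Tendsto (fun x : ℝ => (-x + p * Real.log x + q + ε x) / x)
      atTop (nhds (-1)) := by
    have h1 : Tendsto (fun x : ℝ => -1 + (p * (Real.log x / x) + (q * x⁻¹ + ε x * x⁻¹)))
        atTop (nhds (-1 + (p * 0 + (q * 0 + 0 * 0)))) :=
      tendsto_const_nhds.add ((hlog.const_mul p).add ((hinv.const_mul q).add (hε.mul hinv)))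
    norm_num at h1
    refine Tendsto.congr' ?_ h1
    filter_upwards [eventually_gt_atTop 0] with x hx
    have hx' : x ≠ 0 := hx.ne'
    field_simp
    ring
  have := hnum.div (den_tendsto r s) one_ne_zero
  norm_num at this
  refine Tendsto.congr' ?_ this
  filter_upwards [eventually_gt_atTop 0] with x hx
  show ((-x + p * Real.log x + q + ε x) / x) / ((x + r * Real.log x + s) / x) = _
  rw [div_div_div_cancel_right₀ hx.ne']

lemma eps_tendsto (m : ℝ) :
    Tendsto (fun x : ℝ => Real.log (x / (x - m))) atTop (nhds 0) := by
  have h1 : Tendsto (fun x : ℝ => x / (x - m)) atTop (nhds 1) := by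
    have h2 : Tendsto (fun x : ℝ => (x - m)⁻¹) atTop (nhds 0) :=
      tendsto_inv_atTop_zero.comp (tendsto_atTop_add_const_right atTop (-m) tendsto_id)
    have h3 : Tendsto (fun x : ℝ => 1 + m * (x - m)⁻¹) atTop (nhds (1 + m * 0)) :=
      tendsto_const_nhds.add (h2.const_mul m)
    norm_num at h3
    refine Tendsto.congr' ?_ h3
    filter_upwards [eventually_gt_atTop (m + 1)] with x hx
    have hx' : x - m ≠ 0 := by intro h; rw [sub_eq_zero] at h; linarith
    field_simp
    ring
  have h4 := (Real.continuousAt_log one_ne_zero).tendsto.comp h1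
  rwa [Real.log_one] at h4

/-- The upper incomplete gamma function `Γ(a, x) = ∫_x^∞ t^{a-1} e^{-t} dt`. -/
noncomputable def upperGamma (a x : ℝ) : ℝ :=
  ∫ t in Set.Ioi x, t ^ (a - 1) * Real.exp (-t)

/-- With `P(z) = Γ(M, αMz/(aT))/(M-1)!` and
`I*(z) = M (α z/(aT) - 1 - log (α z/(aT)))`, one has `log P(z) / I*(z) → -1`
as `z → ∞`. -/
theorem rod_linear_forcing_ldp_limit
    (M : ℕ) (hM : 1 ≤ M) (a T α : ℝ) (ha : 0 < a) (hT : 0 < T) (hα : 0 < α)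
    (P Istar : ℝ → ℝ)
    (hP : ∀ z, P z = upperGamma M (α * M * z / (a * T)) / Nat.factorial (M - 1))
    (hIstar : ∀ z, Istar z
      = M * (α * z / (a * T) - 1 - Real.log (α * z / (a * T)))) :
    Tendsto (fun z => Real.log (P z) / Istar z) atTop (nhds (-1)) := by
  have hM1 : (1:ℝ) ≤ (M:ℝ) := by exact_mod_cast hM
  have hM0 : (0:ℝ) < (M:ℝ) := by linarith
  set m : ℝ := (M:ℝ) - 1 with hm_def
  have hm : 0 ≤ m := by simp only [hm_def]; linarith
  set φ : ℝ → ℝ := fun z => α * M * z / (a * T) with hφ_def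
  have hφ : Tendsto φ atTop atTop := by
    have hk : 0 < α * M / (a * T) := by positivity
    have := Tendsto.const_mul_atTop hk (tendsto_id (α := ℝ))
    refine this.congr (fun z => ?_)
    simp only [hφ_def, id]
    ring
  set lf : ℝ := Real.log (Nat.factorial (M - 1)) with hlf_def
  set r : ℝ := -(M:ℝ) with hr_def
  set s : ℝ := (M:ℝ) * Real.log M - M with hs_def
  have hlow := (ratio_tendsto m (-lf) r s (fun _ => 0) tendsto_const_nhds).comp hφ
  have hhigh := (ratio_tendsto m (-lf) r s
    (fun x => Real.log (x / (x - m))) (eps_tendsto m)).comp hφ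
  refine tendsto_of_tendsto_of_tendsto_of_le_of_le' hlow hhigh ?_ ?_
  all_goals {
    filter_upwards [hφ.eventually (eventually_gt_atTop ((M:ℝ))),
      hφ.eventually (den_pos r s)] with z hxM hDpos
    set x : ℝ := φ z with hx_def
    have hx0 : 0 < x := lt_trans hM0 hxM
    have hxm : m < x := by simp only [hm_def]; linarith
    have hfact : (0:ℝ) < (Nat.factorial (M - 1) : ℝ) := by
      exact_mod_cast Nat.factorial_pos (M - 1)
    have hΓlb := gamma_lb hm hx0
    have hΓub := gamma_ub hm hxm hx0
    have hug : upperGamma (M:ℝ) x = ∫ t in Set.Ioi x, t ^ m * Real.exp (-t) := by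
      simp only [upperGamma, hm_def]
    have hΓpos : 0 < upperGamma (M:ℝ) x := by
      rw [hug]; exact lt_of_lt_of_le (by positivity) hΓlb
    have hlogP : Real.log (P z) = Real.log (upperGamma (M:ℝ) x) - lf := by
      rw [hP z, Real.log_div hΓpos.ne' hfact.ne', hlf_def]
    have hlb_log : m * Real.log x - x ≤ Real.log (upperGamma (M:ℝ) x) := by
      have h := Real.log_le_log (by positivity) (hug ▸ hΓlb)
      rwa [Real.log_mul (by positivity) (Real.exp_ne_zero _), Real.log_rpow hx0,
        Real.log_exp] at h
    have hub_log : Real.log (upperGamma (M:ℝ) x)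
        ≤ m * Real.log x - x + Real.log (x / (x - m)) := by
      have h := Real.log_le_log hΓpos (hug ▸ hΓub)
      rwa [Real.log_mul (by positivity) (ne_of_gt (div_pos hx0 (by linarith : (0:ℝ) < x - m))),
        Real.log_mul (by positivity) (Real.exp_ne_zero _), Real.log_rpow hx0,
        Real.log_exp] at h
    have hIeq : Istar z = x + r * Real.log x + s := by
      rw [hIstar z]
      have hzx : α * z / (a * T) = x / M := by
        simp only [hx_def, hφ_def]
        field_simp
      rw [hzx, Real.log_div hx0.ne' hM0.ne', hr_def, hs_def]
      field_simp
      ring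
    rw [hIeq]
    simp only [Function.comp]
    rw [div_le_div_iff_of_pos_right hDpos]
    rw [hlogP]
    first
      | linarith
      | linarith
  }
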